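/- Let k ∈ ℕ, let S_1 and S_m be binary strings of length ℓ ≥ 1, and let c = (4k+12)ℓ + 4k+8 = |γ(S_1)| + 2k+4. Then for every factor X of length c of the string φ(S_1)·1^{2k+4}·φ(S_1) and every factor Y of length c of the string (γ(S_m)·1^{2k+4})^2, the Hamming distance satisfies Ham(X, Y) ≥ 2k+1. -/
import Mathlib


/-- Hamming distance between two (equal-length) strings:
the number of positions where they differ. -/
def ham : List Bool → List Bool → ℕ
  | x :: U, y :: V => (if x = y then 0 else 1) + ham U V
  | _, _ => 0

/-- The morphism `φ`: `φ(0) = 0^{2k+4} 1010 0^{2k+4}` and `φ(1) = 0^{2k+4} 1011 0^{2k+4}`,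
with `0 ↦ false`, `1 ↦ true`. -/
def phi (k : ℕ) (S : List Bool) : List Bool :=
  S.flatMap fun x =>
    List.replicate (2 * k + 4) false ++ [true, false, true, x] ++
      List.replicate (2 * k + 4) false

/-- `γ(S) = 1^{2k+4} · φ(S)`. -/
def gamma (k : ℕ) (S : List Bool) : List Bool :=
  List.replicate (2 * k + 4) true ++ phi k S

/-! ### auxiliary definitions -/

def ones (Z : List Bool) : ℕ := Z.count true

def blk (k : ℕ) (x : Bool) : List Bool :=
  List.replicate (2 * k + 4) false ++ [true, false, true, x] ++
    List.replicate (2 * k + 4) false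

lemma phi_nil (k : ℕ) : phi k [] = [] := rfl

lemma phi_cons (k : ℕ) (x : Bool) (S : List Bool) :
    phi k (x :: S) = blk k x ++ phi k S := by
  simp [phi, blk]

lemma blk_length (k : ℕ) (x : Bool) : (blk k x).length = 4 * k + 12 := by
  simp [blk]; omega

lemma phi_length (k : ℕ) (S : List Bool) :
    (phi k S).length = (4 * k + 12) * S.length := by
  induction S with
  | nil => simp [phi]
  | cons x S ih =>
      rw [phi_cons, List.length_append, blk_length, ih, List.length_cons]
      ring

lemma ones_append (A B : List Bool) : ones (A ++ B) = ones A + ones B :=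
  List.count_append ..

lemma ones_le (Z : List Bool) : ones Z ≤ Z.length := List.count_le_length ..

lemma ones_rep_true (n : ℕ) : ones (List.replicate n true) = n := by
  rw [ones, List.count_replicate]; simp

lemma ones_rep_false (n : ℕ) : ones (List.replicate n false) = 0 := by
  rw [ones, List.count_replicate]; simp

lemma ones_blk (k : ℕ) (x : Bool) : ones (blk k x) ≤ 3 := by
  rw [blk, ones]
  simp [List.count_append, List.count_replicate, List.count_cons]
  cases x <;> simp

lemma ones_infix_le {Z L : List Bool} (h : Z <:+: L) : ones Z ≤ ones L :=
  h.sublist.count_le true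

/-- extract a drop/take decomposition from an infix hypothesis -/
lemma infix_decomp {Z L : List Bool} (h : Z <:+: L) :
    ∃ d, d + Z.length ≤ L.length ∧ Z = (L.drop d).take Z.length := by
  obtain ⟨s, t, hst⟩ := h
  refine ⟨s.length, ?_, ?_⟩
  · rw [← hst]; simp
  · rw [← hst, List.append_assoc, List.drop_left, List.take_left]

/-! ### ham lemmas -/

lemma ham_append {X1 Y1 : List Bool} (h : X1.length = Y1.length)
    (X2 Y2 : List Bool) :
    ham (X1 ++ X2) (Y1 ++ Y2) = ham X1 Y1 + ham X2 Y2 := by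
  induction X1 generalizing Y1 with
  | nil =>
      cases Y1 with
      | nil => simp [ham]
      | cons y Y => simp at h
  | cons x X ih =>
      cases Y1 with
      | nil => simp at h
      | cons y Y =>
          simp only [List.length_cons, Nat.succ.injEq] at h
          show (if x = y then 0 else 1) + ham (X ++ X2) (Y ++ Y2) = _
          rw [ih h]
          show _ = (if x = y then 0 else 1) + ham X Y + ham X2 Y2
          omega

lemma ham_rep {Z : List Bool} {n : ℕ} (h : Z.length = n) :
    ham Z (List.replicate n true) = n - ones Z := by
  induction Z generalizing n with
  | nil => subst h; simp [ham, ones]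
  | cons z Z ih =>
      subst h
      rw [List.length_cons, List.replicate_succ]
      have hz := ones_le Z
      cases z with
      | true =>
          show (0 : ℕ) + ham Z _ = _
          rw [ih rfl]
          have h1 : ones (true :: Z) = ones Z + 1 := by
            simp [ones, List.count_cons]
          rw [h1]; omega
      | false =>
          show (1 : ℕ) + ham Z _ = _
          rw [ih rfl]
          have h1 : ones (false :: Z) = ones Z := by
            simp [ones, List.count_cons]
          rw [h1]
          simp only [ones] at hz ⊢
          omega

lemma ham_rep_ge {Z : List Bool} {n : ℕ} (h : Z.length = n) :
    n ≤ ham Z (List.replicate n true) + ones Z := by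
  rw [ham_rep h]
  have := ones_le Z
  omega

/-! ### counting lemmas for `phi` -/

lemma ones_take_le (L : List Bool) (t : ℕ) : ones (L.take t) ≤ ones L :=
  (List.take_sublist ..).count_le true

lemma ones_drop_le (L : List Bool) (t : ℕ) : ones (L.drop t) ≤ ones L :=
  (List.drop_sublist ..).count_le true

lemma ones_take_mono (L : List Bool) {t u : ℕ} (h : t ≤ u) :
    ones (L.take t) ≤ ones (L.take u) := by
  have heq : L.take t = (L.take u).take t := by
    rw [List.take_take, Nat.min_eq_left h]
  rw [heq]
  exact ones_take_le ..

/-- a prefix of `phi` of length at most `2k+4` is all zeros -/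
lemma ones_phi_take_zero (k : ℕ) (S : List Bool) {t : ℕ} (h : t ≤ 2*k+4) :
    ones ((phi k S).take t) = 0 := by
  have hle := ones_take_mono (phi k S) h
  have hz : ones ((phi k S).take (2*k+4)) = 0 := by
    cases S with
    | nil => simp [phi, ones]
    | cons x S =>
        rw [phi_cons, blk, List.append_assoc, List.append_assoc,
          List.take_append]
        have h3 : 2*k+4 - (List.replicate (2*k+4) false).length = 0 := by simp
        rw [h3, List.take_zero, List.append_nil, List.take_replicate]
        simp [ones, List.count_replicate]
  omega

/-- a prefix of `phi` of length at most one block has at most 3 ones -/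
lemma ones_phi_take_le (k : ℕ) (S : List Bool) {t : ℕ} (h : t ≤ 4*k+12) :
    ones ((phi k S).take t) ≤ 3 := by
  cases S with
  | nil => simp [phi, ones]
  | cons x S =>
      rw [phi_cons, List.take_append]
      have h2 : t - (blk k x).length = 0 := by rw [blk_length]; omega
      rw [h2, List.take_zero, List.append_nil]
      exact le_trans (ones_take_le ..) (ones_blk k x)

lemma ones_blk_drop (k : ℕ) (x : Bool) {d : ℕ} (h : 2*k+8 ≤ d) :
    ones ((blk k x).drop d) = 0 := by
  have e2 : List.drop (d - (2*k+4)) ([true, false, true, x] : List Bool) = [] :=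
    List.drop_eq_nil_of_le (by simp; omega)
  rw [blk, List.drop_append, List.drop_append]
  rw [ones]
  simp only [List.count_append, List.drop_replicate, List.count_replicate,
    List.length_append, List.length_replicate, List.length_cons]
  rw [e2]
  simp

/-- P1 : any window of `phi` of length at most `4k+8` has at most 3 ones -/
lemma ones_phi_window (k : ℕ) (S : List Bool) : ∀ (d : ℕ) {e : ℕ}, e ≤ 4*k+8 →
    ones (((phi k S).drop d).take e) ≤ 3 := by
  induction S with
  | nil => intro d e he; simp [phi, ones]
  | cons x S ih =>
      intro d e he
      rw [phi_cons, List.drop_append, blk_length]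
      by_cases hd : 4*k+12 ≤ d
      · rw [List.drop_eq_nil_of_le (by rw [blk_length]; omega), List.nil_append]
        exact ih _ he
      · push_neg at hd
        have h0 : d - (4*k+12) = 0 := by omega
        rw [h0, List.drop_zero, List.take_append, ones_append,
          List.length_drop, blk_length]
        have hfirst : ones (((blk k x).drop d).take e) ≤ ones ((blk k x).drop d) :=
          ones_take_le ..
        have hblk : ones ((blk k x).drop d) ≤ 3 :=
          le_trans (ones_drop_le ..) (ones_blk k x)
        by_cases h1 : d + e ≤ 4*k+12
        · have h2 : e - (4*k+12 - d) = 0 := by omega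
          rw [h2, List.take_zero]
          have : ones ([] : List Bool) = 0 := rfl
          omega
        · by_cases h2 : d ≤ 2*k+8
          · have h3 : ones ((phi k S).take (e - (4*k+12 - d))) = 0 :=
              ones_phi_take_zero k S (by omega)
            omega
          · push_neg at h2
            have h3 : ones ((blk k x).drop d) = 0 := ones_blk_drop k x (by omega)
            have h4 : ones ((phi k S).take (e - (4*k+12 - d))) ≤ 3 :=
              ones_phi_take_le k S (by omega)
            omega

/-- P4 : any window of `phi S ++ 1^{2k+4} ++ phi S` of length at most `4k+8`
has at most `(2k+4)+3` ones -/
lemma ones_W_window (k : ℕ) (S : List Bool) (d : ℕ) {e : ℕ} (he : e ≤ 4*k+8) :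
    ones ((((phi k S) ++ (List.replicate (2*k+4) true ++ phi k S)).drop d).take e)
      ≤ 2*k+7 := by
  rw [List.drop_append]
  by_cases h1 : (phi k S).length ≤ d
  · rw [List.drop_eq_nil_of_le h1, List.nil_append,
      List.drop_append, List.drop_replicate,
      List.take_append, ones_append, List.take_replicate,
      List.length_replicate]
    simp only [List.length_replicate]
    have o1 : ones (List.replicate
        (min e (2*k+4 - (d - (phi k S).length))) true) ≤ 2*k+4 := by
      rw [ones_rep_true]
      have := min_le_right e (2*k+4 - (d - (phi k S).length))
      omega
    have o2 : ones (((phi k S).drop (d - (phi k S).length - (2*k+4))).take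
        (e - (2*k+4 - (d - (phi k S).length)))) ≤ 3 :=
      ones_phi_window k S _ (by omega)
    omega
  · push_neg at h1
    have h0 : d - (phi k S).length = 0 := by omega
    rw [h0, List.drop_zero, List.take_append, ones_append]
    have o1 : ones (((phi k S).drop d).take e) ≤ 3 := ones_phi_window k S d he
    rw [List.take_append, ones_append, List.take_replicate,
      List.length_replicate, ones_rep_true, List.length_drop]
    have o3 : ones ((phi k S).take
        (e - ((phi k S).length - d) - (2*k+4))) = 0 :=
      ones_phi_take_zero k S (by omega)
    have := min_le_right (e - ((phi k S).length - d)) (2*k+4)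
    omega

/-! ### more helpers -/

lemma rep_split (u n : ℕ) (b : Bool) (h : u ≤ n) :
    List.replicate n b = List.replicate u b ++ List.replicate (n - u) b := by
  rw [← List.replicate_add]
  congr 1
  omega

lemma ham_self (Z : List Bool) : ham Z Z = 0 := by
  induction Z with
  | nil => rfl
  | cons z Z ih => show (if z = z then 0 else 1) + ham Z Z = 0; simp [ih]

/-! ### the two main cases -/

/-- Case A: `Y` contains the run `1^{4k+8}` intact. -/
lemma case_mid (k : ℕ) (X G H : List Bool)
    (hlen : G.length + (4*k+8) ≤ X.length)
    (hones : ones ((X.drop G.length).take (4*k+8)) ≤ 2*k+7) :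
    2*k+1 ≤ ham X (G ++ (List.replicate (4*k+8) true ++ H)) := by
  have hXdec : X = X.take G.length ++ ((X.drop G.length).take (4*k+8)
      ++ (X.drop G.length).drop (4*k+8)) := by
    rw [List.take_append_drop, List.take_append_drop]
  have hmidlen : ((X.drop G.length).take (4*k+8)).length = 4*k+8 := by
    rw [List.length_take, List.length_drop]; omega
  have key : 2*k+1 ≤ ham ((X.drop G.length).take (4*k+8))
      (List.replicate (4*k+8) true) := by
    rw [ham_rep hmidlen]
    omega
  rw [hXdec,
    ham_append (Y1 := G) (by rw [List.length_take]; omega),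
    ham_append (Y1 := List.replicate (4*k+8) true)
      (by rw [hmidlen, List.length_replicate])]
  omega

/-- Case B: `Y = 1^b ++ F2 ++ 1^a` with `a + b = 4k+8`. -/
lemma case_B (k N a b : ℕ) (A B F2 : List Bool)
    (hab : a + b = 4*k + 8)
    (hp1 : 2*k+4 ≤ A.length) (hp2 : A.length ≤ N)
    (hBlen : B.length = N + (2*k+4) - A.length)
    (hF2 : F2.length = N)
    (hAwin : ∀ e, e ≤ 4*k+8 → ones (A.take e) ≤ 3)
    (hBwin : ∀ e, B.length - e ≤ 4*k+8 → ones (B.drop e) ≤ 3) :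
    2*k+1 ≤ ham (A ++ (List.replicate (2*k+4) true ++ B))
      (List.replicate b true ++ (F2 ++ List.replicate a true)) := by
  by_cases hii : A.length < b
  · -- (ii) : Y's prefix run overlaps X's middle run
    have hA3 : ones A ≤ 3 := by
      have := hAwin A.length (by omega)
      rwa [List.take_length] at this
    have hXeq : A ++ (List.replicate (2*k+4) true ++ B)
        = (A ++ List.replicate (b - A.length) true)
          ++ (List.replicate (2*k+4 - (b - A.length)) true ++ B) := by
      rw [rep_split (b - A.length) (2*k+4) true (by omega)]
      simp only [List.append_assoc]
    have hYeq : List.replicate b true ++ (F2 ++ List.replicate a true)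
        = (List.replicate A.length true ++ List.replicate (b - A.length) true)
          ++ (F2 ++ List.replicate a true) := by
      rw [rep_split A.length b true (by omega)]
    rw [hXeq, hYeq,
      ham_append (X1 := A ++ List.replicate (b - A.length) true)
        (Y1 := List.replicate A.length true ++ List.replicate (b - A.length) true)
        (by simp),
      ham_append (X1 := A) (Y1 := List.replicate A.length true)
        (by simp),
      ham_rep (n := A.length) rfl, ham_self]
    have := ones_le A
    omega
  · push_neg at hii
    by_cases hiii : N + b < A.length + (2*k+4)
    · -- (iii) : Y's suffix run overlaps X's middle run
      set t0 := A.length + (2*k+4) - (N + b) with ht0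
      have ht0a : t0 ≤ a := by omega
      have ht0m : t0 ≤ 2*k+4 := by omega
      have hBlen2 : B.length = a - t0 := by omega
      have hB3 : ones B ≤ 3 := by
        have := hBwin 0 (by omega)
        rwa [List.drop_zero] at this
      have hXeq : A ++ (List.replicate (2*k+4) true ++ B)
          = (A ++ List.replicate (2*k+4 - t0) true)
            ++ (List.replicate t0 true ++ B) := by
        rw [rep_split (2*k+4 - t0) (2*k+4) true (by omega),
          show 2*k+4 - (2*k+4 - t0) = t0 by omega]
        simp only [List.append_assoc]
      have hYeq : List.replicate b true ++ (F2 ++ List.replicate a true)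
          = (List.replicate b true ++ F2)
            ++ (List.replicate t0 true ++ List.replicate (a - t0) true) := by
        rw [rep_split t0 a true (by omega)]
        simp only [List.append_assoc]
      rw [hXeq, hYeq,
        ham_append (X1 := A ++ List.replicate (2*k+4 - t0) true)
          (Y1 := List.replicate b true ++ F2)
          (by simp [hF2]; omega),
        ham_append (X1 := List.replicate t0 true)
          (Y1 := List.replicate t0 true) rfl,
        ham_self, ham_rep (n := a - t0) hBlen2]
      omega
    · -- (i) : the runs are disjoint
      push_neg at hiii
      set e3 := N + b - A.length - (2*k+4) with he3
      have hbB : b ≤ 4*k+8 := by omega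
      have he3B : e3 ≤ B.length := by omega
      have hX1 : ones (A.take b) ≤ 3 := hAwin b (by omega)
      have hX3 : ones (B.drop e3) ≤ 3 := hBwin e3 (by omega)
      have hXeq : A ++ (List.replicate (2*k+4) true ++ B)
          = A.take b ++ ((A.drop b ++ (List.replicate (2*k+4) true ++ B.take e3))
            ++ B.drop e3) := by
        conv_lhs => rw [← List.take_append_drop b A,
          ← List.take_append_drop e3 B]
        simp only [List.append_assoc]
      rw [hXeq,
        ham_append (X1 := A.take b) (Y1 := List.replicate b true)
          (by simp; omega),
        ham_append (X1 := A.drop b ++ (List.replicate (2*k+4) true ++ B.take e3))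
          (Y1 := F2)
          (by simp [hF2]; omega),
        ham_rep (n := b) (by rw [List.length_take]; omega),
        ham_rep (n := a) (by rw [List.length_drop]; omega)]
      have hle1 : ones (A.take b) ≤ b := by
        have := ones_le (A.take b)
        rw [List.length_take] at this
        omega
      have hle3 : ones (B.drop e3) ≤ a := by
        have := ones_le (B.drop e3)
        rw [List.length_drop] at this
        omega
      omega


theorem stmt8 (k ℓ : ℕ) (hℓ : 1 ≤ ℓ)
    (S1 Sm : List Bool) (h1 : S1.length = ℓ) (hm : Sm.length = ℓ)
    (c : ℕ) (hc : c = (4 * k + 12) * ℓ + 4 * k + 8)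
    (X Y : List Bool)
    (hX : X <:+: (phi k S1 ++ List.replicate (2 * k + 4) true ++ phi k S1))
    (hXlen : X.length = c)
    (hY : Y <:+: ((gamma k Sm ++ List.replicate (2 * k + 4) true) ++
      (gamma k Sm ++ List.replicate (2 * k + 4) true)))
    (hYlen : Y.length = c) :
    2 * k + 1 ≤ ham X Y := by
  have hF1len : (phi k S1).length = (4*k+12) * ℓ := by rw [phi_length, h1]
  have hF2len : (phi k Sm).length = (4*k+12) * ℓ := by rw [phi_length, hm]
  set N := (4*k+12) * ℓ with hN
  have hNge : 4*k+12 ≤ N := by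
    rw [hN]
    calc 4*k+12 = (4*k+12) * 1 := by ring
    _ ≤ (4*k+12) * ℓ := Nat.mul_le_mul_left _ hℓ
  have hcN : c = N + (4*k+8) := by rw [hc]; ring
  -- decompose X
  rw [List.append_assoc] at hX
  obtain ⟨d, hd, hXeq⟩ := infix_decomp hX
  rw [hXlen] at hd hXeq
  rw [List.length_append, List.length_append, List.length_replicate, hF1len] at hd
  have hdN : d + (2*k+4) ≤ N := by omega
  have hXAB : X = (phi k S1).drop d
      ++ (List.replicate (2*k+4) true ++ (phi k S1).take (d + (2*k+4))) := by
    rw [hXeq, List.drop_append,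
      show d - (phi k S1).length = 0 by omega, List.drop_zero,
      List.take_append,
      List.take_of_length_le (by rw [List.length_drop, hF1len]; omega),
      show c - ((phi k S1).drop d).length = d + (4*k+8) by
        rw [List.length_drop, hF1len]; omega,
      List.take_append,
      List.take_of_length_le (by rw [List.length_replicate]; omega),
      show d + (4*k+8) - (List.replicate (2*k+4) true).length = d + (2*k+4) by
        rw [List.length_replicate]; omega]
  have hp1 : 2*k+4 ≤ ((phi k S1).drop d).length := by
    rw [List.length_drop, hF1len]; omega
  have hp2 : ((phi k S1).drop d).length ≤ N := by
    rw [List.length_drop, hF1len]; omega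
  have hBlen : ((phi k S1).take (d + (2*k+4))).length
      = N + (2*k+4) - ((phi k S1).drop d).length := by
    rw [List.length_take, List.length_drop, hF1len]; omega
  have hAwin : ∀ e, e ≤ 4*k+8 → ones (((phi k S1).drop d).take e) ≤ 3 :=
    fun e he => ones_phi_window k S1 d he
  have hBwin : ∀ e, ((phi k S1).take (d + (2*k+4))).length - e ≤ 4*k+8 →
      ones (((phi k S1).take (d + (2*k+4))).drop e) ≤ 3 := by
    intro e he
    rw [List.drop_take]
    apply ones_phi_window k S1 e
    rw [List.length_take, hF1len] at he
    omega
  -- decompose Y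
  have hCeq : (gamma k Sm ++ List.replicate (2*k+4) true)
        ++ (gamma k Sm ++ List.replicate (2*k+4) true)
      = List.replicate (2*k+4) true ++ ((phi k Sm)
        ++ (List.replicate (4*k+8) true
          ++ ((phi k Sm) ++ List.replicate (2*k+4) true))) := by
    rw [rep_split (2*k+4) (4*k+8) true (by omega),
      show 4*k+8 - (2*k+4) = 2*k+4 by omega]
    simp only [gamma, List.append_assoc]
  rw [hCeq] at hY
  obtain ⟨j, hj, hYeq⟩ := infix_decomp hY
  rw [hYlen] at hj hYeq
  simp only [List.length_append, List.length_replicate, hF2len] at hj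
  by_cases hcase1 : j < 2*k+4
  · -- case B, prefix run of length 2k+4-j
    have hYshape : Y = List.replicate (2*k+4-j) true
        ++ (phi k Sm ++ List.replicate (2*k+4+j) true) := by
      rw [hYeq, List.drop_append]
      simp only [List.length_replicate]
      rw [show j - (2*k+4) = 0 by omega, List.drop_zero, List.drop_replicate,
        List.take_append]
      simp only [List.length_replicate]
      rw [List.take_of_length_le (l := List.replicate (2*k+4-j) true)
          (by simp only [List.length_replicate]; omega),
        show c - (2*k+4-j) = N + (2*k+4+j) by omega,
        List.take_append,
        List.take_of_length_le (by rw [hF2len]; omega),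
        show N + (2*k+4+j) - (phi k Sm).length = 2*k+4+j by rw [hF2len]; omega,
        List.take_append]
      simp only [List.length_replicate]
      rw [List.take_replicate, show min (2*k+4+j) (4*k+8) = 2*k+4+j by omega,
        show 2*k+4+j - (4*k+8) = 0 by omega, List.take_zero, List.append_nil]
    rw [hXAB, hYshape]
    exact case_B k N (2*k+4+j) (2*k+4-j) _ _ _ (by omega) hp1 hp2 hBlen hF2len
      hAwin hBwin
  · push_neg at hcase1
    by_cases hcase2 : j ≤ (2*k+4) + N
    · -- case A : the 1^{4k+8} run is intact in Y
      have hYshape : Y = (phi k Sm).drop (j-(2*k+4))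
          ++ (List.replicate (4*k+8) true ++ (phi k Sm).take (j-(2*k+4))) := by
        rw [hYeq, List.drop_append,
          List.drop_eq_nil_of_le (by simp only [List.length_replicate]; omega),
          List.nil_append]
        simp only [List.length_replicate]
        rw [List.drop_append,
          show j - (2*k+4) - (phi k Sm).length = 0 by rw [hF2len]; omega,
          List.drop_zero, List.take_append,
          List.take_of_length_le (by rw [List.length_drop, hF2len]; omega),
          show c - ((phi k Sm).drop (j-(2*k+4))).length
            = (4*k+8) + (j-(2*k+4)) by rw [List.length_drop, hF2len]; omega,
          List.take_append]
        simp only [List.length_replicate]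
        rw [List.take_of_length_le (l := List.replicate (4*k+8) true)
            (by simp only [List.length_replicate]; omega),
          show (4*k+8) + (j-(2*k+4)) - (4*k+8) = j - (2*k+4) by omega,
          List.take_append,
          show j - (2*k+4) - (phi k Sm).length = 0 by rw [hF2len]; omega,
          List.take_zero, List.append_nil]
      rw [hYshape]
      apply case_mid
      · rw [List.length_drop, hF2len, hXlen]; omega
      · set Z := (X.drop ((phi k Sm).drop (j-(2*k+4))).length).take (4*k+8)
          with hZ
        have hZinf : Z <:+: (phi k S1
            ++ (List.replicate (2*k+4) true ++ phi k S1)) :=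
          ((List.take_prefix _ _).isInfix.trans
            (List.drop_suffix _ _).isInfix).trans hX
        obtain ⟨d2, hd2, hZeq⟩ := infix_decomp hZinf
        rw [hZeq]
        exact ones_W_window k S1 d2 (le_trans (List.length_take_le _ _) le_rfl)
    · -- case B, suffix run of length j - (2k+4) - N
      push_neg at hcase2
      have hjc : j ≤ c := by omega
      have hYshape : Y = List.replicate ((4*k+8) - (j-(2*k+4)-N)) true
          ++ (phi k Sm ++ List.replicate (j-(2*k+4)-N) true) := by
        rw [hYeq, List.drop_append,
          List.drop_eq_nil_of_le (by simp only [List.length_replicate]; omega),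
          List.nil_append]
        simp only [List.length_replicate]
        rw [List.drop_append,
          List.drop_eq_nil_of_le (by rw [hF2len]; omega), List.nil_append,
          show j - (2*k+4) - (phi k Sm).length = j - (2*k+4) - N by
            rw [hF2len],
          List.drop_append, List.drop_replicate]
        simp only [List.length_replicate]
        rw [show j - (2*k+4) - N - (4*k+8) = 0 by omega, List.drop_zero,
          List.take_append]
        simp only [List.length_replicate]
        rw [List.take_of_length_le (l := List.replicate ((4*k+8) - (j-(2*k+4)-N)) true)
            (by simp only [List.length_replicate]; omega),
          show c - ((4*k+8) - (j-(2*k+4)-N)) = N + (j-(2*k+4)-N) by omega,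
          List.take_append,
          List.take_of_length_le (by rw [hF2len]; omega),
          show N + (j-(2*k+4)-N) - (phi k Sm).length = j-(2*k+4)-N by
            rw [hF2len]; omega,
          List.take_replicate,
          show min (j-(2*k+4)-N) (2*k+4) = j-(2*k+4)-N by omega]
      rw [hXAB, hYshape]
      exact case_B k N (j-(2*k+4)-N) ((4*k+8) - (j-(2*k+4)-N)) _ _ _ (by omega)
        hp1 hp2 hBlen hF2len hAwin hBwin
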